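/- Let H be a probability space, (fᵢ) a complete orthonormal system in L²(H), and (rᵢ) a Rademacher system on H. If for some C > 0 and all finite collections x₁,…,xₙ ∈ X one has C⁻¹ ∑ᵢ ‖xᵢ‖² ≤ ∫_H ‖∑ᵢ fᵢ(t)•xᵢ‖² dt, then also C⁻¹ ∑ᵢ ‖xᵢ‖² ≤ ∫_H ‖∑ᵢ rᵢ(t)•xᵢ‖² dt for all finite collections x₁,…,xₙ ∈ X. -/

import Mathlib

open MeasureTheory
open scoped ENNReal

set_option linter.unusedSectionVars false
set_option maxHeartbeats 1000000


namespace RadKwapien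

variable {H : Type*} [MeasurableSpace H] {μ : Measure H} [IsProbabilityMeasure μ]

lemma lp2_norm_sq {𝕜 : Type*} [RCLike 𝕜] (u : Lp 𝕜 2 μ) :
    ‖u‖^2 = ∫ t, ‖u t‖^2 ∂μ := by
  rw [@norm_sq_eq_re_inner 𝕜, L2.inner_def, ← integral_re (L2.integrable_inner u u)]
  refine integral_congr_ae (Filter.Eventually.of_forall fun t => ?_)
  exact (@norm_sq_eq_re_inner 𝕜 𝕜 _ _ _ (u t)).symm

lemma lp2_integrable_sq (u : Lp ℝ 2 μ) :
    Integrable (fun t => (u t)^2) μ := by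
  have := L2.integrable_inner (𝕜 := ℝ) u u
  refine this.congr (Filter.Eventually.of_forall fun t => ?_)
  simp [RCLike.inner_apply, sq]

lemma lp_coeFn_sum {E' : Type*} [NormedAddCommGroup E'] {ι : Type*}
    (s : Finset ι) (u : ι → Lp E' 2 μ) :
    ⇑(∑ i ∈ s, u i) =ᵐ[μ] fun t => ∑ i ∈ s, u i t := by
  classical
  induction s using Finset.induction_on with
  | empty => simp only [Finset.sum_empty]; exact Lp.coeFn_zero E' 2 μ
  | insert a s' hns ih =>
      rw [Finset.sum_insert hns]
      filter_upwards [Lp.coeFn_add (u a) (∑ i ∈ s', u i), ih] with t h1 h2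
      rw [Finset.sum_insert hns, h1, Pi.add_apply, h2]

noncomputable def nu : Measure ℝ :=
  (1/2 : ℝ≥0∞) • Measure.dirac (1:ℝ) + (1/2 : ℝ≥0∞) • Measure.dirac (-1:ℝ)

lemma nu_prob : IsProbabilityMeasure (nu) := by
  constructor
  simp only [nu, Measure.add_apply, Measure.smul_apply, Measure.dirac_apply, smul_eq_mul]
  simp [ENNReal.inv_two_add_inv_two]

lemma rad_marginal (r : ℕ → H → ℝ) (hrmeas : ∀ i, Measurable (r i))
    (hrdist : ∀ i, μ {t | r i t = 1} = 1/2 ∧ μ {t | r i t = -1} = 1/2)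
    (i : ℕ) {s : Set ℝ} (hs : MeasurableSet s) :
    μ (r i ⁻¹' s) = nu s := by
  classical
  set A := {t | r i t = 1} with hA
  set B := {t | r i t = -1} with hB
  have hAm : MeasurableSet A := (hrmeas i) (measurableSet_singleton 1)
  have hBm : MeasurableSet B := (hrmeas i) (measurableSet_singleton (-1))
  have hdisj : Disjoint A B := by
    rw [Set.disjoint_left]
    intro t htA htB
    have e1 : r i t = 1 := htA
    have e2 : r i t = -1 := htB
    linarith
  have hAB : μ (A ∪ B) = 1 := by
    rw [measure_union hdisj hBm, (hrdist i).1, (hrdist i).2, ENNReal.add_halves]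
  have hcompl : μ (A ∪ B)ᶜ = 0 := by
    rw [prob_compl_eq_one_sub (hAm.union hBm), hAB, tsub_self]
  have hpre : MeasurableSet (r i ⁻¹' s) := (hrmeas i) hs
  have h1 : r i ⁻¹' s ∩ A = if (1:ℝ) ∈ s then A else ∅ := by
    by_cases h : (1:ℝ) ∈ s <;> simp only [h, if_true, if_false]
    · ext t; simp only [Set.mem_inter_iff, Set.mem_preimage, hA, Set.mem_setOf_eq]
      exact ⟨fun ht => ht.2, fun ht => ⟨by rw [ht]; exact h, ht⟩⟩
    · ext t; simp only [Set.mem_inter_iff, Set.mem_preimage, hA, Set.mem_setOf_eq,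
        Set.mem_empty_iff_false, iff_false]
      rintro ⟨hts, ht1⟩; rw [ht1] at hts; exact h hts
  have h2 : r i ⁻¹' s ∩ B = if (-1:ℝ) ∈ s then B else ∅ := by
    by_cases h : (-1:ℝ) ∈ s <;> simp only [h, if_true, if_false]
    · ext t; simp only [Set.mem_inter_iff, Set.mem_preimage, hB, Set.mem_setOf_eq]
      exact ⟨fun ht => ht.2, fun ht => ⟨by rw [ht]; exact h, ht⟩⟩
    · ext t; simp only [Set.mem_inter_iff, Set.mem_preimage, hB, Set.mem_setOf_eq,
        Set.mem_empty_iff_false, iff_false]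
      rintro ⟨hts, ht1⟩; rw [ht1] at hts; exact h hts
  have key : μ (r i ⁻¹' s) = μ (r i ⁻¹' s ∩ (A ∪ B)) := by
    rw [measure_inter_conull hcompl]
  rw [key, Set.inter_union_distrib_left, measure_union _ (hpre.inter hBm), h1, h2]
  · rw [nu]
    simp only [Measure.add_apply, Measure.smul_apply, Measure.dirac_apply' _ hs, smul_eq_mul]
    by_cases ha : (1:ℝ) ∈ s <;> by_cases hb : (-1:ℝ) ∈ s <;>
      simp [ha, hb, (hrdist i).1, (hrdist i).2, Set.indicator, hA, hB, one_div]
  · exact hdisj.mono Set.inter_subset_right Set.inter_subset_right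

open ProbabilityTheory in
lemma rad_map_pi (r : ℕ → H → ℝ) (hrmeas : ∀ i, Measurable (r i))
    (hrindep : iIndepFun r μ)
    (hrdist : ∀ i, μ {t | r i t = 1} = 1/2 ∧ μ {t | r i t = -1} = 1/2)
    {n : ℕ} (q : Fin n → ℕ) (hq : Function.Injective q) :
    μ.map (fun t (j : Fin n) => r (q j) t) = Measure.pi (fun _ => nu) := by
  classical
  haveI : IsProbabilityMeasure (nu) := nu_prob
  have hT : Measurable (fun t (j : Fin n) => r (q j) t) :=
    measurable_pi_lambda _ (fun j => hrmeas (q j))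
  refine (Measure.pi_eq (μ := fun _ : Fin n => nu) (fun s hs => ?_)).symm
  rw [Measure.map_apply hT (MeasurableSet.univ_pi hs)]
  have hpre : (fun t (j : Fin n) => r (q j) t) ⁻¹' (Set.pi Set.univ s)
      = ⋂ j, r (q j) ⁻¹' s j := by
    ext t; simp [Set.mem_pi]
  rw [hpre]
  set sets : ℕ → Set ℝ := fun i => if h : ∃ j, q j = i then s h.choose else Set.univ with hsets
  have hsq : ∀ j, sets (q j) = s j := by
    intro j
    have hex : ∃ j', q j' = q j := ⟨j, rfl⟩
    simp only [hsets, dif_pos hex]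
    rw [hq hex.choose_spec]
  have hmeas : ∀ i, i ∈ Finset.image q Finset.univ → MeasurableSet (sets i) := by
    intro i _
    by_cases h : ∃ j, q j = i
    · simp only [hsets, dif_pos h]; exact hs _
    · simp only [hsets, dif_neg h]; exact MeasurableSet.univ
  have hInter : (⋂ i ∈ Finset.image q Finset.univ, r i ⁻¹' sets i) = ⋂ j, r (q j) ⁻¹' s j := by
    ext t
    simp only [Set.mem_iInter, Finset.mem_image, Finset.mem_univ, true_and, Set.mem_preimage]
    constructor
    · intro h j
      have := h (q j) ⟨j, rfl⟩
      rwa [hsq j] at this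
    · rintro h i ⟨j, rfl⟩
      rw [hsq j]; exact h j
  have hprod := hrindep.measure_inter_preimage_eq_mul (Finset.image q Finset.univ) hmeas
  rw [← hInter, hprod, Finset.prod_image (fun a _ b _ hab => hq hab)]
  exact Finset.prod_congr rfl fun j _ => by
    rw [hsq j]; exact rad_marginal r hrmeas hrdist (q j) (hs j)

open ProbabilityTheory in
lemma rad_equidist {X : Type*} [NormedAddCommGroup X] [NormedSpace ℝ X]
    (r : ℕ → H → ℝ) (hrmeas : ∀ i, Measurable (r i))
    (hrindep : iIndepFun r μ)
    (hrdist : ∀ i, μ {t | r i t = 1} = 1/2 ∧ μ {t | r i t = -1} = 1/2)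
    {n : ℕ} (x : Fin n → X) (q : Fin n → ℕ) (hq : Function.Injective q) :
    ∫ t, ‖∑ j, r (q j) t • x j‖^2 ∂μ = ∫ t, ‖∑ j : Fin n, r j.val t • x j‖^2 ∂μ := by
  classical
  set h : (Fin n → ℝ) → ℝ := fun y => ‖∑ j, y j • x j‖^2 with hh
  have hcont : Continuous h := by
    apply (Continuous.norm ?_).pow 2
    exact continuous_finset_sum _ fun j _ => (continuous_apply j).smul continuous_const
  have key : ∀ (q' : Fin n → ℕ), Function.Injective q' →
      ∫ t, ‖∑ j, r (q' j) t • x j‖^2 ∂μ = ∫ y, h y ∂(Measure.pi (fun _ : Fin n => nu)) := by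
    intro q' hq'
    have hT : Measurable (fun t (j : Fin n) => r (q' j) t) :=
      measurable_pi_lambda _ (fun j => hrmeas (q' j))
    rw [← rad_map_pi r hrmeas hrindep hrdist q' hq',
      integral_map hT.aemeasurable hcont.aestronglyMeasurable]
  rw [key q hq, key (fun j : Fin n => j.val) (fun a b hab => Fin.val_injective hab)]

section Hilbert

local notation "⟪" x ", " y "⟫" => @inner ℂ _ _ x y

variable {E : Type*} [NormedAddCommGroup E] [InnerProductSpace ℂ E] [CompleteSpace E]

lemma on_norm_sum (F : ℕ → E) (hF : Orthonormal ℂ F) (s : Finset ℕ) (c : ℕ → ℂ) :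
    ‖∑ i ∈ s, c i • F i‖^2 = ∑ i ∈ s, ‖c i‖^2 := by
  rw [@norm_sq_eq_re_inner ℂ, hF.inner_sum c c s]
  rw [map_sum]
  refine Finset.sum_congr rfl fun i _ => ?_
  rw [RCLike.conj_mul]
  norm_cast

lemma gliding (F : ℕ → E) (hF : Orthonormal ℂ F)
    (hFd : (Submodule.span ℂ (Set.range F))ᗮ = ⊥)
    (R : ℕ → E) (hR : Orthonormal ℂ R) (n : ℕ) {ε : ℝ} (hε : 0 < ε) :
    ∃ (m : Fin n → ℕ) (I : Fin n → Finset ℕ), Function.Injective m ∧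
      (∀ j k, j ≠ k → Disjoint (I j) (I k)) ∧
      ∀ j, ‖R (m j) - ∑ i ∈ I j, ⟪F i, R (m j)⟫ • F i‖ ≤ ε := by
  classical
  set b : HilbertBasis ℕ ℂ E := HilbertBasis.mkOfOrthogonalEqBot hF hFd with hb
  have hbc : ⇑b = F := HilbertBasis.coe_mkOfOrthogonalEqBot hF hFd
  induction n with
  | zero =>
      exact ⟨Fin.elim0, Fin.elim0, fun a => a.elim0, fun a => a.elim0, fun a => a.elim0⟩
  | succ n IH =>
      obtain ⟨m, I, hinj, hdisj, happ⟩ := IH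
      set J : Finset ℕ := Finset.univ.biUnion I with hJ
      set B : ℕ := (Finset.univ.sup m) + 1 with hB
      have hsummable : ∀ i : ℕ, Summable (fun M => ‖⟪R M, F i⟫‖^2) :=
        fun i => hR.inner_products_summable (F i)
      have htend : Filter.Tendsto (fun M => ∑ i ∈ J, ‖⟪R M, F i⟫‖^2)
          Filter.atTop (nhds 0) := by
        have : Filter.Tendsto (fun M => ∑ i ∈ J, ‖⟪R M, F i⟫‖^2) Filter.atTop
            (nhds (∑ i ∈ J, (0:ℝ))) :=
          tendsto_finset_sum J (fun i _ => (hsummable i).tendsto_atTop_zero)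
        simpa using this
      have hev : ∀ᶠ M in Filter.atTop,
          (∑ i ∈ J, ‖⟪R M, F i⟫‖^2) < (ε/2)^2 ∧ B ≤ M := by
        refine Filter.Eventually.and ?_ (Filter.eventually_ge_atTop B)
        exact htend.eventually_lt_const (by positivity)
      obtain ⟨M, hM⟩ := hev.exists
      have hsum : HasSum (fun i => ⟪F i, R M⟫ • F i) (R M) := by
        have h1 := b.hasSum_repr (R M)
        have h2 : (fun i => b.repr (R M) i • b i) = fun i => ⟪F i, R M⟫ • F i := by
          funext i
          rw [b.repr_apply_apply, hbc]
        rwa [h2] at h1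
      have hball : ∀ᶠ s in Filter.atTop,
          dist (∑ i ∈ s, ⟪F i, R M⟫ • F i) (R M) < ε/2 :=
        hsum.eventually (Metric.ball_mem_nhds _ (by positivity))
      rw [Filter.eventually_atTop] at hball
      obtain ⟨s₀, hs₀⟩ := hball
      have hclose : ‖(∑ i ∈ s₀, ⟪F i, R M⟫ • F i) - R M‖ < ε/2 := by
        have := hs₀ s₀ le_rfl
        rwa [dist_eq_norm] at this
      set Inew : Finset ℕ := s₀ \ J with hInew
      have hsplit : (∑ i ∈ s₀, ⟪F i, R M⟫ • F i)
          = (∑ i ∈ s₀ ∩ J, ⟪F i, R M⟫ • F i) + ∑ i ∈ Inew, ⟪F i, R M⟫ • F i := by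
        rw [hInew, ← Finset.sum_inter_add_sum_sdiff s₀ J (fun i => ⟪F i, R M⟫ • F i)]
      have hsmall2 : ‖∑ i ∈ s₀ ∩ J, ⟪F i, R M⟫ • F i‖^2 ≤ (ε/2)^2 := by
        rw [on_norm_sum F hF]
        have h1 : ∑ i ∈ s₀ ∩ J, ‖⟪F i, R M⟫‖^2 ≤ ∑ i ∈ J, ‖⟪F i, R M⟫‖^2 :=
          Finset.sum_le_sum_of_subset_of_nonneg (Finset.inter_subset_right)
            (fun _ _ _ => by positivity)
        have h2 : ∑ i ∈ J, ‖⟪F i, R M⟫‖^2 = ∑ i ∈ J, ‖⟪R M, F i⟫‖^2 :=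
          Finset.sum_congr rfl fun i _ => by rw [norm_inner_symm]
        linarith [hM.1]
      have hsmall : ‖∑ i ∈ s₀ ∩ J, ⟪F i, R M⟫ • F i‖ ≤ ε/2 := by
        nlinarith [norm_nonneg (∑ i ∈ s₀ ∩ J, ⟪F i, R M⟫ • F i), hε.le]
      have happnew : ‖R M - ∑ i ∈ Inew, ⟪F i, R M⟫ • F i‖ ≤ ε := by
        have heq : R M - ∑ i ∈ Inew, ⟪F i, R M⟫ • F i
            = (R M - ∑ i ∈ s₀, ⟪F i, R M⟫ • F i) + ∑ i ∈ s₀ ∩ J, ⟪F i, R M⟫ • F i := by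
          rw [hsplit]; abel
        rw [heq]
        calc ‖_ + _‖ ≤ ‖R M - ∑ i ∈ s₀, ⟪F i, R M⟫ • F i‖
              + ‖∑ i ∈ s₀ ∩ J, ⟪F i, R M⟫ • F i‖ := norm_add_le _ _
          _ ≤ ε/2 + ε/2 := by
              refine add_le_add ?_ hsmall
              rw [← norm_neg]; simp only [neg_sub]; exact hclose.le
          _ = ε := by ring
      have hmlt : ∀ j : Fin n, m j < M := fun j =>
        lt_of_lt_of_le (Nat.lt_of_le_of_lt (Finset.le_sup (Finset.mem_univ j))
          (Nat.lt_succ_self _)) hM.2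
      refine ⟨Fin.snoc m M, Fin.snoc I Inew, ?_, ?_, ?_⟩
      · intro a c hac
        rcases Fin.eq_castSucc_or_eq_last a with ⟨a', rfl⟩ | rfl <;>
          rcases Fin.eq_castSucc_or_eq_last c with ⟨c', rfl⟩ | rfl
        · simp only [Fin.snoc_castSucc] at hac
          exact congrArg _ (hinj hac)
        · simp only [Fin.snoc_castSucc, Fin.snoc_last] at hac
          exact absurd hac (hmlt a').ne
        · simp only [Fin.snoc_castSucc, Fin.snoc_last] at hac
          exact absurd hac.symm (hmlt c').ne
        · rfl
      · intro a c hac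
        have hub : ∀ j : Fin n, Disjoint Inew (I j) := by
          intro j
          refine Finset.disjoint_left.mpr fun i hi hij => ?_
          rw [hInew, Finset.mem_sdiff] at hi
          exact hi.2 (Finset.mem_biUnion.mpr ⟨j, Finset.mem_univ j, hij⟩)
        rcases Fin.eq_castSucc_or_eq_last a with ⟨a', rfl⟩ | rfl <;>
          rcases Fin.eq_castSucc_or_eq_last c with ⟨c', rfl⟩ | rfl
        · simp only [Fin.snoc_castSucc]
          exact hdisj a' c' (fun h => hac (congrArg _ h))
        · simp only [Fin.snoc_castSucc, Fin.snoc_last]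
          exact (hub a').symm
        · simp only [Fin.snoc_castSucc, Fin.snoc_last]
          exact hub c'
        · exact absurd rfl hac
      · intro j
        rcases Fin.eq_castSucc_or_eq_last j with ⟨j', rfl⟩ | rfl
        · simpa only [Fin.snoc_castSucc] using happ j'
        · simpa only [Fin.snoc_last] using happnew

end Hilbert

end RadKwapien

open RadKwapien in
/-- Let `(H, μ)` be a probability space, `(fᵢ)` a complete orthonormal
system in `L²(H)`, and `(rᵢ)` a Rademacher system on `H`.  If for some `C > 0` all
finite collections `x₁,…,xₙ` in a Banach space `X` satisfy
`C⁻¹ ∑ ‖xᵢ‖² ≤ ∫ ‖∑ fᵢ(t) • xᵢ‖² dμ`, then also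
`C⁻¹ ∑ ‖xᵢ‖² ≤ ∫ ‖∑ rᵢ(t) • xᵢ‖² dμ` for all finite collections. -/
theorem rademacher_lower_of_cons_lower
    {H : Type*} [MeasurableSpace H] (μ : Measure H) [IsProbabilityMeasure μ]
    {X : Type*} [NormedAddCommGroup X] [NormedSpace ℂ X] [CompleteSpace X]
    (f : ℕ → H → ℂ) (hfmem : ∀ i, MemLp (f i) 2 μ)
    (hforth : ∀ i j, ∫ t, f i t * (starRingEnd ℂ) (f j t) ∂μ = if i = j then 1 else 0)
    (hfcomplete : ∀ g : H → ℂ, MemLp g 2 μ →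
      (∀ i, ∫ t, g t * (starRingEnd ℂ) (f i t) ∂μ = 0) → g =ᵐ[μ] 0)
    (r : ℕ → H → ℝ) (hrmeas : ∀ i, Measurable (r i))
    (hrindep : ProbabilityTheory.iIndepFun r μ)
    (hrdist : ∀ i, μ {t | r i t = 1} = 1/2 ∧ μ {t | r i t = -1} = 1/2)
    (hrorth : ∀ i j, ∫ t, r i t * r j t ∂μ = if i = j then 1 else 0)
    (C : ℝ) (hC : 0 < C)
    (hlower : ∀ (n : ℕ) (x : Fin n → X),
      C⁻¹ * ∑ i, ‖x i‖ ^ 2 ≤ ∫ t, ‖∑ i : Fin n, f i.val t • x i‖ ^ 2 ∂μ) :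
    ∀ (n : ℕ) (x : Fin n → X),
      C⁻¹ * ∑ i, ‖x i‖ ^ 2 ≤ ∫ t, ‖∑ i : Fin n, r i.val t • x i‖ ^ 2 ∂μ := by
  classical
  intro n x
  -- a.e. the Rademacher functions take values ±1
  have haer : ∀ i : ℕ, ∀ᵐ t ∂μ, r i t = 1 ∨ r i t = -1 := by
    intro i
    have hAm : MeasurableSet {t | r i t = 1} := (hrmeas i) (measurableSet_singleton 1)
    have hBm : MeasurableSet {t | r i t = -1} := (hrmeas i) (measurableSet_singleton (-1))
    have hdisj : Disjoint {t | r i t = 1} {t | r i t = -1} := by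
      rw [Set.disjoint_left]
      intro t h1 h2
      have e1 : r i t = 1 := h1
      have e2 : r i t = -1 := h2
      linarith
    have hAB : μ ({t | r i t = 1} ∪ {t | r i t = -1}) = 1 := by
      rw [measure_union hdisj hBm, (hrdist i).1, (hrdist i).2, ENNReal.add_halves]
    have hc : μ ({t | r i t = 1} ∪ {t | r i t = -1})ᶜ = 0 := by
      rw [prob_compl_eq_one_sub (hAm.union hBm), hAB, tsub_self]
    have hset : {t | ¬(r i t = 1 ∨ r i t = -1)} = ({t | r i t = 1} ∪ {t | r i t = -1})ᶜ := by
      ext t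
      simp [not_or]
    rw [ae_iff, hset]
    exact hc
  set ρ : ℕ → H → ℂ := fun j t => ((r j t : ℝ) : ℂ) with hρdef
  have hρmem : ∀ j, MemLp (ρ j) 2 μ := by
    intro j
    refine MemLp.of_bound ((Complex.measurable_ofReal.comp (hrmeas j)).aestronglyMeasurable) 1 ?_
    filter_upwards [haer j] with t ht
    rcases ht with h | h <;> simp [hρdef, h]
  set F : ℕ → Lp ℂ 2 μ := fun i => (hfmem i).toLp (f i) with hFdef
  set R : ℕ → Lp ℂ 2 μ := fun j => (hρmem j).toLp (ρ j) with hRdef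
  have hFcoe : ∀ i, ⇑(F i) =ᵐ[μ] f i := fun i => (hfmem i).coeFn_toLp
  have hRcoe : ∀ j, ⇑(R j) =ᵐ[μ] ρ j := fun j => (hρmem j).coeFn_toLp
  have hFon : Orthonormal ℂ F := by
    rw [orthonormal_iff_ite]
    intro i j
    rw [L2.inner_def]
    have heq : (∫ a, (inner ℂ (F i a) (F j a) : ℂ) ∂μ)
        = ∫ a, f j a * (starRingEnd ℂ) (f i a) ∂μ := by
      refine integral_congr_ae ?_
      filter_upwards [hFcoe i, hFcoe j] with t h1 h2
      rw [RCLike.inner_apply, h1, h2, mul_comm]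
    rw [heq, hforth j i]
    by_cases h : i = j
    · simp [h]
    · rw [if_neg (fun hji => h hji.symm), if_neg h]
  have hRon : Orthonormal ℂ R := by
    rw [orthonormal_iff_ite]
    intro i j
    rw [L2.inner_def]
    have heq : (∫ a, (inner ℂ (R i a) (R j a) : ℂ) ∂μ)
        = ∫ a, ((r i a * r j a : ℝ) : ℂ) ∂μ := by
      refine integral_congr_ae ?_
      filter_upwards [hRcoe i, hRcoe j] with t h1 h2
      rw [RCLike.inner_apply, h1, h2]
      simp only [hρdef]
      rw [Complex.conj_ofReal]
      push_cast
      ring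
    rw [heq]
    have h9 : ∫ a, ((r i a * r j a : ℝ) : ℂ) ∂μ = ((∫ a, r i a * r j a ∂μ : ℝ) : ℂ) :=
      integral_ofReal
    rw [h9, hrorth i j]
    split_ifs <;> simp
  have hFd : (Submodule.span ℂ (Set.range F))ᗮ = ⊥ := by
    rw [Submodule.eq_bot_iff]
    intro g hg
    have hgi : ∀ i, (inner ℂ (F i) g : ℂ) = 0 := fun i =>
      (Submodule.mem_orthogonal _ g).mp hg (F i) (Submodule.subset_span ⟨i, rfl⟩)
    have hgae : ⇑g =ᵐ[μ] 0 := by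
      apply hfcomplete g (Lp.memLp g)
      intro i
      have h0 := hgi i
      rw [L2.inner_def] at h0
      rw [← h0]
      refine integral_congr_ae ?_
      filter_upwards [hFcoe i] with t h1
      rw [RCLike.inner_apply, h1, mul_comm]
    exact Lp.eq_zero_iff_ae_eq_zero.mpr hgae
  set S := ∑ i, ‖x i‖^2 with hS
  set T := ∑ i, ‖x i‖ with hT
  set V := ∫ t, ‖∑ i : Fin n, r i.val t • x i‖^2 ∂μ with hV
  have hV0 : 0 ≤ V := integral_nonneg fun t => by positivity
  have hT0 : 0 ≤ T := Finset.sum_nonneg fun _ _ => norm_nonneg _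
  have hS0 : 0 ≤ S := Finset.sum_nonneg fun _ _ => by positivity
  have key : ∀ ε : ℝ, 0 < ε → ε < 1 → C⁻¹ * ((1-ε)^2 * S) ≤ (Real.sqrt V + ε * T)^2 := by
    intro ε hε hε1
    obtain ⟨m, I, hminj, hIdisj, happ⟩ := gliding F hFon hFd R hRon n hε
    set c : Fin n → ℕ → ℂ := fun j i => (inner ℂ (F i) (R (m j)) : ℂ) with hcdef
    set G : Fin n → Lp ℂ 2 μ := fun j => ∑ i ∈ I j, c j i • F i with hGdef
    have happ' : ∀ j, ‖R (m j) - G j‖ ≤ ε := happ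
    have hGnorm2 : ∀ j, ‖G j‖^2 = ∑ i ∈ I j, ‖c j i‖^2 := fun j =>
      on_norm_sum F hFon (I j) (c j)
    have hGlow : ∀ j, (1-ε)^2 ≤ ‖G j‖^2 := by
      intro j
      have h1 : ‖R (m j)‖ = 1 := hRon.1 (m j)
      have h2 : ‖R (m j)‖ ≤ ‖G j‖ + ‖R (m j) - G j‖ := by
        have h3 := norm_add_le (G j) (R (m j) - G j)
        simpa using h3
      have h3 : 1 - ε ≤ ‖G j‖ := by
        rw [h1] at h2
        linarith [happ' j]
      nlinarith [norm_nonneg (G j)]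
    set gt : Fin n → H → ℂ := fun j t => ∑ i ∈ I j, c j i * f i t with hgtdef
    have hgtmem : ∀ j, MemLp (gt j) 2 μ := fun j =>
      memLp_finsetSum _ (fun i _ => (hfmem i).const_mul (c j i))
    have hGcoe : ∀ j, ⇑(G j) =ᵐ[μ] gt j := by
      intro j
      refine (lp_coeFn_sum (I j) (fun i => c j i • F i)).trans ?_
      have hall : ∀ᵐ t ∂μ, ∀ i ∈ (I j : Set ℕ), (c j i • F i) t = c j i * f i t := by
        rw [Filter.eventually_all_finite (I j).finite_toSet]
        intro i _
        filter_upwards [Lp.coeFn_smul (c j i) (F i), hFcoe i] with t h1 h2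
        rw [h1, Pi.smul_apply, h2, smul_eq_mul]
      filter_upwards [hall] with t ht
      exact Finset.sum_congr rfl fun i hi => ht i (Finset.mem_coe.mpr hi)
    set N : ℕ := (Finset.univ.biUnion I).sup id + 1 with hN
    have hsubN : ∀ j, ∀ i ∈ I j, i < N := by
      intro j i hi
      have h1 : i ≤ (Finset.univ.biUnion I).sup id :=
        Finset.le_sup (f := id) (Finset.mem_biUnion.mpr ⟨j, Finset.mem_univ j, hi⟩)
      omega
    set y : Fin N → X := fun i => ∑ j, if (i : ℕ) ∈ I j then c j i • x j else 0 with hy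
    have hpoint : ∀ t, ∑ i : Fin N, f i.val t • y i = ∑ j, gt j t • x j := by
      intro t
      have h1 : ∀ i : Fin N, f i.val t • y i
          = ∑ j, if (i:ℕ) ∈ I j then (c j i * f i.val t) • x j else 0 := by
        intro i
        simp only [hy]
        rw [Finset.smul_sum]
        refine Finset.sum_congr rfl fun j _ => ?_
        split_ifs with h
        · rw [smul_smul, mul_comm]
        · rw [smul_zero]
      rw [Finset.sum_congr rfl (fun i _ => h1 i), Finset.sum_comm]
      refine Finset.sum_congr rfl fun j _ => ?_
      have h2 : ∑ i : Fin N, (if (i:ℕ) ∈ I j then (c j i * f i.val t) • x j else 0)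
          = ∑ i ∈ Finset.range N, (if i ∈ I j then (c j i * f i t) • x j else 0) :=
        Fin.sum_univ_eq_sum_range (fun i => if i ∈ I j then (c j i * f i t) • x j else 0) N
      rw [h2, Finset.sum_ite_mem,
        Finset.inter_eq_right.mpr (fun i hi => Finset.mem_range.mpr (hsubN j i hi)),
        ← Finset.sum_smul]
    have hynorm : ∑ i : Fin N, ‖y i‖^2 = ∑ j, ‖G j‖^2 * ‖x j‖^2 := by
      have h1 : ∀ i : Fin N, ‖y i‖^2
          = ∑ j, if (i:ℕ) ∈ I j then ‖c j i‖^2 * ‖x j‖^2 else 0 := by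
        intro i
        by_cases hex : ∃ j, (i:ℕ) ∈ I j
        · obtain ⟨j₀, hj₀⟩ := hex
          have hne : ∀ k : Fin n, k ≠ j₀ → ¬ ((i:ℕ) ∈ I k) := by
            intro k hk hik
            exact (Finset.disjoint_left.mp (hIdisj k j₀ hk) hik) hj₀
          have hy_eq : y i = c j₀ i • x j₀ := by
            simp only [hy]
            rw [Finset.sum_eq_single_of_mem j₀ (Finset.mem_univ j₀)
              (fun k _ hk => if_neg (hne k hk))]
            rw [if_pos hj₀]
          rw [hy_eq, Finset.sum_eq_single_of_mem j₀ (Finset.mem_univ j₀)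
            (fun k _ hk => if_neg (hne k hk)), if_pos hj₀, norm_smul, mul_pow]
        · push_neg at hex
          have hy0 : y i = 0 := by
            simp only [hy]
            exact Finset.sum_eq_zero fun j _ => if_neg (hex j)
          rw [hy0, Finset.sum_eq_zero fun j _ => if_neg (hex j)]
          simp
      rw [Finset.sum_congr rfl (fun i _ => h1 i), Finset.sum_comm]
      refine Finset.sum_congr rfl fun j _ => ?_
      have h2 : ∑ i : Fin N, (if (i:ℕ) ∈ I j then ‖c j i‖^2 * ‖x j‖^2 else 0)
          = ∑ i ∈ Finset.range N, (if i ∈ I j then ‖c j i‖^2 * ‖x j‖^2 else 0) :=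
        Fin.sum_univ_eq_sum_range (fun i => if i ∈ I j then ‖c j i‖^2 * ‖x j‖^2 else 0) N
      rw [h2, Finset.sum_ite_mem,
        Finset.inter_eq_right.mpr (fun i hi => Finset.mem_range.mpr (hsubN j i hi)),
        ← Finset.sum_mul, hGnorm2 j]
    have hstepA : C⁻¹ * ((1-ε)^2 * S) ≤ ∫ t, ‖∑ j, gt j t • x j‖^2 ∂μ := by
      have h0 := hlower N y
      have h1 : (1-ε)^2 * S ≤ ∑ i : Fin N, ‖y i‖^2 := by
        rw [hynorm, hS, Finset.mul_sum]
        exact Finset.sum_le_sum fun j _ =>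
          mul_le_mul_of_nonneg_right (hGlow j) (by positivity)
      have h2 : ∫ t, ‖∑ i : Fin N, f i.val t • y i‖^2 ∂μ
          = ∫ t, ‖∑ j, gt j t • x j‖^2 ∂μ := by
        refine integral_congr_ae (Filter.Eventually.of_forall fun t => ?_)
        show ‖∑ i : Fin N, f i.val t • y i‖^2 = ‖∑ j, gt j t • x j‖^2
        rw [hpoint t]
      calc C⁻¹ * ((1-ε)^2*S) ≤ C⁻¹ * ∑ i : Fin N, ‖y i‖^2 :=
            mul_le_mul_of_nonneg_left h1 (by positivity)
        _ ≤ _ := by rw [← h2]; exact h0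
    set dd : Fin n → H → ℂ := fun j t => gt j t - ρ (m j) t with hdddef
    have hddmem : ∀ j, MemLp (dd j) 2 μ := fun j => (hgtmem j).sub (hρmem (m j))
    set vB : H → ℝ := fun t => ‖∑ j, r (m j) t • x j‖ with hvBdef
    set w : H → ℝ := fun t => ∑ j, ‖x j‖ * ‖dd j t‖ with hwdef
    have hvBmeas : AEStronglyMeasurable vB μ := by
      have h1 : StronglyMeasurable (fun t => ∑ j, r (m j) t • x j) :=
        Finset.stronglyMeasurable_fun_sum _ fun j _ =>
          ((hrmeas (m j)).stronglyMeasurable.smul stronglyMeasurable_const)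
      exact h1.norm.aestronglyMeasurable
    have hvBmem : MemLp vB 2 μ := by
      refine MemLp.of_bound hvBmeas T ?_
      have hall : ∀ᵐ t ∂μ, ∀ j : Fin n, r (m j) t = 1 ∨ r (m j) t = -1 :=
        (ae_all_iff).mpr fun j => haer (m j)
      filter_upwards [hall] with t ht
      rw [Real.norm_eq_abs, abs_of_nonneg (norm_nonneg _)]
      calc vB t ≤ ∑ j, ‖r (m j) t • x j‖ := norm_sum_le _ _
        _ ≤ T := by
          rw [hT]
          refine Finset.sum_le_sum fun j _ => ?_
          rw [norm_smul, Real.norm_eq_abs]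
          rcases ht j with h | h <;> rw [h] <;> simp
    have hwmem : MemLp w 2 μ :=
      memLp_finsetSum _ (fun j _ => ((hddmem j).norm.const_mul ‖x j‖))
    set VB := hvBmem.toLp vB with hVBdef
    set D : Fin n → Lp ℝ 2 μ := fun j => ((hddmem j).norm).toLp (fun t => ‖dd j t‖) with hDdef
    set W : Lp ℝ 2 μ := ∑ j, ‖x j‖ • D j with hWdef
    have hWcoe : ⇑W =ᵐ[μ] w := by
      refine (lp_coeFn_sum Finset.univ (fun j => ‖x j‖ • D j)).trans ?_
      have hall : ∀ᵐ t ∂μ, ∀ j : Fin n, (‖x j‖ • D j) t = ‖x j‖ * ‖dd j t‖ := by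
        refine (ae_all_iff).mpr fun j => ?_
        filter_upwards [Lp.coeFn_smul ‖x j‖ (D j), ((hddmem j).norm).coeFn_toLp] with t h1 h2
        rw [h1, Pi.smul_apply, h2, smul_eq_mul]
      filter_upwards [hall] with t ht
      exact Finset.sum_congr rfl fun j _ => ht j
    have hpb : ∀ t, ‖∑ j, gt j t • x j‖ ≤ vB t + w t := by
      intro t
      have hBr : (∑ j, (ρ (m j) t) • x j) = ∑ j, r (m j) t • x j := by
        refine Finset.sum_congr rfl fun j _ => ?_
        exact Complex.coe_smul (r (m j) t) (x j)
      have hsplit : ∑ j, gt j t • x j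
          = (∑ j, (ρ (m j) t) • x j) + ∑ j, dd j t • x j := by
        rw [← Finset.sum_add_distrib]
        refine Finset.sum_congr rfl fun j _ => ?_
        rw [← add_smul]
        congr 1
        simp only [hdddef]
        ring
      rw [hsplit, hBr]
      calc ‖_‖ ≤ ‖∑ j, r (m j) t • x j‖ + ‖∑ j, dd j t • x j‖ := norm_add_le _ _
        _ ≤ vB t + w t := by
          refine add_le_add le_rfl ?_
          calc ‖∑ j, dd j t • x j‖ ≤ ∑ j, ‖dd j t • x j‖ := norm_sum_le _ _
            _ = ∑ j, ‖x j‖ * ‖dd j t‖ := by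
                refine Finset.sum_congr rfl fun j _ => ?_
                rw [norm_smul, mul_comm]
            _ = w t := rfl
    have hintB : ∫ t, ‖∑ j, gt j t • x j‖^2 ∂μ ≤ (‖VB‖ + ‖W‖)^2 := by
      have hg_int : Integrable (fun t => ((VB + W) t)^2) μ := lp2_integrable_sq (VB + W)
      have hle : (fun t => ‖∑ j, gt j t • x j‖^2) ≤ᵐ[μ] fun t => ((VB + W) t)^2 := by
        filter_upwards [Lp.coeFn_add VB W, hvBmem.coeFn_toLp, hWcoe] with t h1 h2 h3
        have hv0 : 0 ≤ vB t := norm_nonneg _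
        have hw0 : 0 ≤ w t := Finset.sum_nonneg fun j _ => by positivity
        have h4 : (VB + W) t = vB t + w t := by rw [h1, Pi.add_apply, h2, h3]
        rw [h4]
        have h5 := hpb t
        nlinarith [norm_nonneg (∑ j, gt j t • x j)]
      calc ∫ t, ‖∑ j, gt j t • x j‖^2 ∂μ ≤ ∫ t, ((VB + W) t)^2 ∂μ :=
            integral_mono_of_nonneg (Filter.Eventually.of_forall fun t => by positivity)
              hg_int hle
        _ = ‖VB + W‖^2 := by
            rw [lp2_norm_sq (VB + W)]
            refine integral_congr_ae (Filter.Eventually.of_forall fun t => ?_)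
            show ((VB + W) t)^2 = ‖(VB + W) t‖^2
            rw [Real.norm_eq_abs, sq_abs]
        _ ≤ (‖VB‖ + ‖W‖)^2 := by
            have h6 := norm_add_le VB W
            nlinarith [norm_nonneg (VB + W), norm_nonneg VB, norm_nonneg W]
    have hVBnorm : ‖VB‖ = Real.sqrt V := by
      have h1 : ‖VB‖^2 = ∫ t, (vB t)^2 ∂μ := by
        rw [lp2_norm_sq VB]
        refine integral_congr_ae ?_
        filter_upwards [hvBmem.coeFn_toLp] with t h2
        rw [h2, Real.norm_eq_abs, sq_abs]
      have h2 : ∫ t, (vB t)^2 ∂μ = V := by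
        simp only [hvBdef, hV]
        exact rad_equidist r hrmeas hrindep hrdist x m hminj
      rw [← Real.sqrt_sq (norm_nonneg VB), h1, h2]
    have hDle : ∀ j, ‖D j‖ ≤ ε := by
      intro j
      have h1 : ‖D j‖^2 = ∫ t, ‖dd j t‖^2 ∂μ := by
        rw [lp2_norm_sq (D j)]
        refine integral_congr_ae ?_
        filter_upwards [((hddmem j).norm).coeFn_toLp] with t h2
        rw [h2, Real.norm_eq_abs, abs_of_nonneg (norm_nonneg _)]
      have h2 : ‖R (m j) - G j‖^2 = ∫ t, ‖dd j t‖^2 ∂μ := by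
        rw [lp2_norm_sq (R (m j) - G j)]
        refine integral_congr_ae ?_
        filter_upwards [Lp.coeFn_sub (R (m j)) (G j), hRcoe (m j), hGcoe j] with t h3 h4 h5
        rw [h3, Pi.sub_apply, h4, h5]
        simp only [hdddef]
        rw [norm_sub_rev]
      have h3 : ‖D j‖^2 ≤ ε^2 := by
        rw [h1, ← h2]
        have h4 := happ' j
        nlinarith [norm_nonneg (R (m j) - G j)]
      nlinarith [norm_nonneg (D j), hε.le]
    have hWle : ‖W‖ ≤ ε * T := by
      simp only [hWdef]
      calc ‖∑ j, ‖x j‖ • D j‖ ≤ ∑ j, ‖‖x j‖ • D j‖ := norm_sum_le _ _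
        _ ≤ ∑ j, ‖x j‖ * ε := by
            refine Finset.sum_le_sum fun j _ => ?_
            rw [norm_smul, Real.norm_eq_abs, abs_of_nonneg (norm_nonneg _)]
            exact mul_le_mul_of_nonneg_left (hDle j) (norm_nonneg _)
        _ = ε * T := by rw [hT, ← Finset.sum_mul]; ring
    refine hstepA.trans (hintB.trans ?_)
    have h7 : ‖VB‖ + ‖W‖ ≤ Real.sqrt V + ε * T := by
      rw [hVBnorm]
      linarith
    have h8 : (0:ℝ) ≤ ‖VB‖ + ‖W‖ := by positivity
    exact pow_le_pow_left₀ h8 h7 2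
  -- pass to the limit ε → 0⁺
  have hlim1 : Filter.Tendsto (fun ε : ℝ => C⁻¹ * ((1-ε)^2 * S))
      (nhdsWithin 0 (Set.Ioi 0)) (nhds (C⁻¹ * S)) := by
    have hcont : Continuous fun ε : ℝ => C⁻¹ * ((1-ε)^2 * S) :=
      continuous_const.mul (((continuous_const.sub continuous_id).pow 2).mul continuous_const)
    have h := (hcont.tendsto 0).mono_left (nhdsWithin_le_nhds (s := Set.Ioi (0:ℝ)))
    simpa using h
  have hlim2 : Filter.Tendsto (fun ε : ℝ => (Real.sqrt V + ε * T)^2)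
      (nhdsWithin 0 (Set.Ioi 0)) (nhds V) := by
    have hcont : Continuous fun ε : ℝ => (Real.sqrt V + ε * T)^2 :=
      (continuous_const.add (continuous_id.mul continuous_const)).pow 2
    have h := (hcont.tendsto 0).mono_left (nhdsWithin_le_nhds (s := Set.Ioi (0:ℝ)))
    have h0 : (Real.sqrt V + 0 * T)^2 = V := by
      rw [zero_mul, add_zero, Real.sq_sqrt hV0]
    rw [h0] at h
    exact h
  refine le_of_tendsto_of_tendsto hlim1 hlim2 ?_
  have h1 : ∀ᶠ ε in nhdsWithin (0:ℝ) (Set.Ioi 0), ε < 1 :=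
    Filter.eventually_of_mem (nhdsWithin_le_nhds (Iio_mem_nhds (by norm_num)))
      (fun ε hε => hε)
  have h2 : ∀ᶠ ε in nhdsWithin (0:ℝ) (Set.Ioi 0), (0:ℝ) < ε :=
    Filter.eventually_of_mem self_mem_nhdsWithin (fun ε hε => hε)
  filter_upwards [h1, h2] with ε hε1 hε0
  exact key ε hε0 hε1
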